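/- Let I ⊆ ℝ be an open interval, a, c, f₃ : ℝ → ℝ with c(x) ≠ 0 on I, and let K be differentiable on I with K(x) ≠ 0 and K'(x) = f₃(x)/(2c(x)) for all x ∈ I. Define b(x) = ( f₃(x) − 4a(x)c(x) − c(x)²K(x)² ) / ( 2c(x)K(x) ). Let B be differentiable on I with B'(x) = b(x) + c(x)K(x) = ( f₃(x) − 4a(x)c(x) + c(x)²K(x)² ) / ( 2c(x)K(x) ), and G differentiable on I with G'(x) = c(x)·exp(B(x)). Then y_p(x) = K(x)/2 solves the Riccati equation on I, and for every constant C₉ ∈ ℝ the function y(x) = K(x)/2 + exp(B(x))/(C₉ − G(x)) satisfies y'(x) = a(x) + b(x)y(x) + c(x)y(x)² at every x ∈ I with C₉ − G(x) ≠ 0. -/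

import Mathlib

/-- Theorem 6 (Case 6): with `K ≠ 0`, `K' = f₃/(2c)`,
`b = (f₃ − 4ac − c²K²)/(2cK)`, `B' = b + cK = (f₃ − 4ac + c²K²)/(2cK)` and
`G' = c · exp B`, the function `y_p = K/2` solves the Riccati equation, and
`y = K/2 + exp B / (C₉ − G)` solves it wherever `C₉ − G ≠ 0`. -/
theorem riccati_case6
    (p q : ℝ) (a b c f₃ K B G : ℝ → ℝ)
    (hc : ∀ x ∈ Set.Ioo p q, c x ≠ 0)
    (hKne : ∀ x ∈ Set.Ioo p q, K x ≠ 0)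
    (hK : ∀ x ∈ Set.Ioo p q, HasDerivAt K (f₃ x / (2 * c x)) x)
    (hb : ∀ x ∈ Set.Ioo p q,
      b x = (f₃ x - 4 * a x * c x - c x ^ 2 * K x ^ 2) / (2 * c x * K x))
    (hB : ∀ x ∈ Set.Ioo p q, HasDerivAt B (b x + c x * K x) x)
    (hG : ∀ x ∈ Set.Ioo p q, HasDerivAt G (c x * Real.exp (B x)) x)
    (C₉ : ℝ) :
    (∀ x ∈ Set.Ioo p q,
      HasDerivAt (fun t => K t / 2)
        (a x + b x * (K x / 2) + c x * (K x / 2) ^ 2) x) ∧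
    (∀ x ∈ Set.Ioo p q, C₉ - G x ≠ 0 →
      HasDerivAt (fun t => K t / 2 + Real.exp (B t) / (C₉ - G t))
        (a x + b x * (K x / 2 + Real.exp (B x) / (C₉ - G x))
          + c x * (K x / 2 + Real.exp (B x) / (C₉ - G x)) ^ 2) x) := by
  have key : ∀ x ∈ Set.Ioo p q,
      a x + b x * (K x / 2) + c x * (K x / 2) ^ 2 = f₃ x / (2 * c x) / 2 := by
    intro x hx
    rw [hb x hx]
    rw [div_div, eq_div_iff (by
      have := hc x hx; positivity : (2 * c x * 2 : ℝ) ≠ 0)]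
    rw [div_mul_eq_mul_div, add_mul, add_mul, div_mul_eq_mul_div]
    have hm : (f₃ x - 4 * a x * c x - c x ^ 2 * K x ^ 2) * (K x / 2) * (2 * c x * 2)
        / (2 * c x * K x) = f₃ x - 4 * a x * c x - c x ^ 2 * K x ^ 2 := by
      rw [div_eq_iff (mul_ne_zero (mul_ne_zero two_ne_zero (hc x hx)) (hKne x hx))]
      ring
    rw [hm]
    ring
  constructor
  · intro x hx
    rw [key x hx]
    exact (hK x hx).div_const 2
  · intro x hx hCG
    have h1 : HasDerivAt (fun t => K t / 2) (f₃ x / (2 * c x) / 2) x :=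
      (hK x hx).div_const 2
    have hE : HasDerivAt (fun t => Real.exp (B t))
        (Real.exp (B x) * (b x + c x * K x)) x := (hB x hx).exp
    have hD : HasDerivAt (fun t => C₉ - G t) (-(c x * Real.exp (B x))) x :=
      (hG x hx).const_sub C₉
    have h2 : HasDerivAt (fun t => Real.exp (B t) / (C₉ - G t))
        ((Real.exp (B x) * (b x + c x * K x) * (C₉ - G x)
          - Real.exp (B x) * (-(c x * Real.exp (B x)))) / (C₉ - G x) ^ 2) x :=
      hE.div hD hCG
    have := h1.add h2
    convert this using 1
    case e'_4 => rfl
    case e'_5 => rfl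
    case e'_8 => rfl
    have e1 : a x + b x * (K x / 2 + Real.exp (B x) / (C₉ - G x))
        + c x * (K x / 2 + Real.exp (B x) / (C₉ - G x)) ^ 2
      = (a x + b x * (K x / 2) + c x * (K x / 2) ^ 2)
        + (Real.exp (B x) / (C₉ - G x)) * (b x + c x * K x)
        + c x * (Real.exp (B x) / (C₉ - G x)) ^ 2 := by ring
    rw [e1, key x hx]
    have e2 : (Real.exp (B x) * (b x + c x * K x) * (C₉ - G x)
        - Real.exp (B x) * (-(c x * Real.exp (B x)))) / (C₉ - G x) ^ 2
      = (Real.exp (B x) / (C₉ - G x)) * (b x + c x * K x)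
        + c x * (Real.exp (B x) / (C₉ - G x)) ^ 2 := by
      field_simp
      ring
    rw [e2]
    ring
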